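/- Let d, L be positive integers and let V be a Hermitian operator on H = ⊗_{l=1}^{L} ℂ^d. Suppose the linear map 𝒱̄(ρ) = −i(Vρ − ρV) on operators on H admits a decomposition 𝒱̄ = Σ_{k=1}^{K} α_k · Φ_{1,k} ⊗ Φ_{2,k} ⊗ ⋯ ⊗ Φ_{L,k}, where each Φ_{l,k} is a generalised quantum operation on d×d matrices and α_k ∈ ℂ. Then Σ_{k=1}^{K} |α_k| ≥ max_{1≤l≤L} ‖R_l(X̄)‖₁, where X̄ is the Choi operator of 𝒱̄, R_l is the l-th realignment, and ‖·‖₁ is the trace norm. -/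

import Mathlib

open Matrix
open scoped Kronecker ComplexOrder

/-- Partial trace over the second (ancilla) tensor factor. -/
noncomputable def ptraceE {ι κ : Type*} [Fintype κ] (X : Matrix (ι × κ) (ι × κ) ℂ) :
    Matrix ι ι ℂ :=
  Matrix.of fun i j => ∑ k, X (i, k) (j, k)

/-- A generalised quantum operation `Φ(ρ) = Tr_E[U (ρ ⊗ |e⟩⟨e|) V†]`. -/
def IsGQO {ι : Type*} [Fintype ι] [DecidableEq ι]
    (Φ : Matrix ι ι ℂ → Matrix ι ι ℂ) : Prop :=
  ∃ (dE : ℕ) (e : Fin dE → ℂ) (U V : Matrix (ι × Fin dE) (ι × Fin dE) ℂ),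
    star e ⬝ᵥ e = 1 ∧
    U ∈ Matrix.unitaryGroup (ι × Fin dE) ℂ ∧
    V ∈ Matrix.unitaryGroup (ι × Fin dE) ℂ ∧
    ∀ ρ, Φ ρ = ptraceE (U * (ρ ⊗ₖ Matrix.vecMulVec e (star e)) * Vᴴ)

/-- The trace norm `‖M‖₁ = Tr √(M Mᴴ)`. -/
noncomputable def traceNorm {m n : Type*} [Fintype m] [Fintype n] [DecidableEq m]
    (M : Matrix m n ℂ) : ℝ :=
  (((Matrix.posSemidef_self_mul_conjTranspose M).1.eigenvectorUnitary : Matrix m m ℂ) *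
      Matrix.diagonal (fun i => ((Real.sqrt ((Matrix.posSemidef_self_mul_conjTranspose M).1.eigenvalues i) : ℝ) : ℂ)) *
      (star (Matrix.posSemidef_self_mul_conjTranspose M).1.eigenvectorUnitary : Matrix m m ℂ)).trace.re

/-- The tensor product `Φ_1 ⊗ ⋯ ⊗ Φ_L` of maps on the subsystems,
as a map on operators on the whole system, obtained by linear extension
from its action on matrix units. -/
noncomputable def tensorMap {ι : Type*} [Fintype ι] [DecidableEq ι] {L : ℕ}
    (Φ : Fin L → (Matrix ι ι ℂ → Matrix ι ι ℂ)) :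
    Matrix (Fin L → ι) (Fin L → ι) ℂ → Matrix (Fin L → ι) (Fin L → ι) ℂ := fun A =>
  Matrix.of fun a b => ∑ x : Fin L → ι, ∑ y : Fin L → ι,
    A x y * ∏ l, Φ l (Matrix.single (x l) (y l) 1) (a l) (b l)

/-- The Choi operator of a map `Λ` on operators on `⊗_l ℂ^d`:
`Λ` acting on the `L` primary factors and the identity on the `L` copies,
applied to the tensor product of the maximally entangled states `φ_{l,l'}`. -/
noncomputable def choiOp {ι : Type*} [Fintype ι] [DecidableEq ι] {L : ℕ}
    (Λ : Matrix (Fin L → ι) (Fin L → ι) ℂ → Matrix (Fin L → ι) (Fin L → ι) ℂ) :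
    Matrix (Fin L → ι × ι) (Fin L → ι × ι) ℂ :=
  Matrix.of fun p q =>
    (((Fintype.card ι : ℂ)) ^ L)⁻¹ *
      Λ (Matrix.single (fun l => (p l).2) (fun l => (q l).2) 1)
        (fun l => (p l).1) (fun l => (q l).1)

/-- The `l`-th realignment of an operator on `⊗_{m} (ℂ^d ⊗ ℂ^d)`. -/
def realign {ι : Type*} {L : ℕ} (X : Matrix (Fin L → ι × ι) (Fin L → ι × ι) ℂ) (l : Fin L) :
    Matrix ((ι × ι) × (ι × ι)) ({ m : Fin L // m ≠ l } → (ι × ι) × (ι × ι)) ℂ :=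
  Matrix.of fun r g =>
    X (fun m => if h : m = l then r.1 else (g ⟨m, h⟩).1)
      (fun m => if h : m = l then r.2 else (g ⟨m, h⟩).2)

noncomputable def en {ι : Type*} [Fintype ι] (x : ι → ℂ) : ℝ :=
  Real.sqrt (∑ i, Complex.normSq (x i))

lemma en_nonneg {ι : Type*} [Fintype ι] (x : ι → ℂ) : 0 ≤ en x := Real.sqrt_nonneg _

lemma en_sq {ι : Type*} [Fintype ι] (x : ι → ℂ) :
    en x ^ 2 = ∑ i, Complex.normSq (x i) :=
  Real.sq_sqrt (Finset.sum_nonneg fun i _ => Complex.normSq_nonneg _)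

lemma en_eq_norm {ι : Type*} [Fintype ι] (a : ι → ℂ) :
    ‖(WithLp.equiv 2 (ι → ℂ)).symm a‖ = en a := by
  rw [EuclideanSpace.norm_eq, en]
  congr 1
  refine Finset.sum_congr rfl fun i _ => ?_
  rw [← Complex.sq_norm]; rfl

lemma cs_dot {ι : Type*} [Fintype ι] (a b : ι → ℂ) :
    ‖star a ⬝ᵥ b‖ ≤ en a * en b := by
  have h1 : star a ⬝ᵥ b =
      @inner ℂ (EuclideanSpace ℂ ι) _ ((WithLp.equiv 2 (ι → ℂ)).symm a)
        ((WithLp.equiv 2 (ι → ℂ)).symm b) := by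
    simp [dotProduct, EuclideanSpace.inner_eq_star_dotProduct, mul_comm]
  have h2 := @norm_inner_le_norm ℂ (EuclideanSpace ℂ ι) _ _ _
      ((WithLp.equiv 2 (ι → ℂ)).symm a) ((WithLp.equiv 2 (ι → ℂ)).symm b)
  rw [← h1, en_eq_norm, en_eq_norm] at h2
  exact h2

lemma dot_self_eq {ι : Type*} [Fintype ι] (x : ι → ℂ) :
    star x ⬝ᵥ x = ((∑ i, Complex.normSq (x i) : ℝ) : ℂ) := by
  push_cast
  simp [dotProduct, Complex.normSq_eq_conj_mul_self]

lemma dot_self_mulVec {p q : Type*} [Fintype p] [Fintype q]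
    (A : Matrix p q ℂ) (x : q → ℂ) :
    star (A *ᵥ x) ⬝ᵥ (A *ᵥ x) = star x ⬝ᵥ ((Aᴴ * A) *ᵥ x) := by
  rw [star_mulVec, dotProduct_mulVec, vecMul_vecMul, ← dotProduct_mulVec]

lemma en_sq' {ι : Type*} [Fintype ι] (x : ι → ℂ) :
    ((en x : ℝ) : ℂ) ^ 2 = star x ⬝ᵥ x := by
  rw [dot_self_eq, ← Complex.ofReal_pow]
  norm_cast
  exact Real.sq_sqrt (Finset.sum_nonneg fun i _ => Complex.normSq_nonneg _)

lemma sum_normSq_mulVec {p q : Type*} [Fintype p] [Fintype q] [DecidableEq q]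
    (A : Matrix p q ℂ) (hA : Aᴴ * A = 1) (x : q → ℂ) :
    ∑ i, Complex.normSq ((A *ᵥ x) i) = ∑ i, Complex.normSq (x i) := by
  have h := dot_self_mulVec A x
  rw [hA, one_mulVec, dot_self_eq, dot_self_eq] at h
  exact Complex.ofReal_inj.mp h

lemma dot_diag {m : Type*} [Fintype m] [DecidableEq m] (c y : m → ℂ) :
    star y ⬝ᵥ ((Matrix.diagonal c) *ᵥ y) = ∑ i, c i * (Complex.normSq (y i) : ℂ) := by
  simp only [dotProduct, Matrix.mulVec_diagonal, Pi.star_apply,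
    Complex.normSq_eq_conj_mul_self, Complex.star_def]
  exact Finset.sum_congr rfl fun i _ => by ring

lemma sandwich {p : Type*} [Fintype p] [DecidableEq p] (E A B : Matrix p p ℂ)
    (hE1 : Eᴴ * E = 1) :
    (E * A * Eᴴ) * (E * B * Eᴴ) = E * (A * B) * Eᴴ := by
  have h : ∀ X : Matrix p p ℂ, Eᴴ * (E * X) = X := fun X => by
    rw [← Matrix.mul_assoc, hE1, Matrix.one_mul]
  simp only [Matrix.mul_assoc, h]

lemma polar_exists {m n : Type*} [Fintype m] [Fintype n] [DecidableEq m]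
    (M : Matrix m n ℂ) :
    ∃ W : Matrix m n ℂ, (∀ u : n → ℂ, en (W *ᵥ u) ≤ en u) ∧
      M * Wᴴ = ((Matrix.posSemidef_self_mul_conjTranspose M).1.eigenvectorUnitary : Matrix m m ℂ) *
      Matrix.diagonal (fun i => ((Real.sqrt ((Matrix.posSemidef_self_mul_conjTranspose M).1.eigenvalues i) : ℝ) : ℂ)) *
      (star (Matrix.posSemidef_self_mul_conjTranspose M).1.eigenvectorUnitary : Matrix m m ℂ) := by
  classical
  set hH := Matrix.posSemidef_self_mul_conjTranspose M with hHdef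
  set E : Matrix m m ℂ := hH.1.eigenvectorUnitary.1 with hEdef
  set lam : m → ℝ := hH.1.eigenvalues with hlamdef
  have hlam0 : ∀ i, 0 ≤ lam i := hH.eigenvalues_nonneg
  have hE1 : Eᴴ * E = 1 := by
    simpa [Matrix.star_eq_conjTranspose] using
      Matrix.mem_unitaryGroup_iff'.mp (hH.1.eigenvectorUnitary).2
  have hE2 : E * Eᴴ = 1 := by
    simpa [Matrix.star_eq_conjTranspose] using
      Matrix.mem_unitaryGroup_iff.mp (hH.1.eigenvectorUnitary).2
  have hspec : M * Mᴴ = E * Matrix.diagonal (fun i => (lam i : ℂ)) * Eᴴ := by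
    exact hH.1.spectral_theorem
  set D' : Matrix m m ℂ := Matrix.diagonal (fun i => ((Real.sqrt (lam i))⁻¹ : ℂ)) with hD'def
  have hWH : (E * D' * Eᴴ * M)ᴴ = Mᴴ * (E * D' * Eᴴ) := by
    have hD'H : D'ᴴ = D' := by
      rw [hD'def, Matrix.diagonal_conjTranspose]
      have hst : (star fun i => ((Real.sqrt (lam i) : ℂ))⁻¹) =
          (fun i => ((Real.sqrt (lam i) : ℂ))⁻¹) := by
        funext i
        simp [Complex.conj_ofReal]
      rw [hst]
    simp only [Matrix.conjTranspose_mul, hD'H, Matrix.conjTranspose_conjTranspose,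
      Matrix.mul_assoc]
  refine ⟨E * D' * Eᴴ * M, ?_, ?_⟩
  · -- contraction
    set piR : m → ℝ := fun i => (Real.sqrt (lam i))⁻¹ * (lam i * (Real.sqrt (lam i))⁻¹)
      with hpiRdef
    have hpi0 : ∀ i, 0 ≤ piR i := by
      intro i
      have := hlam0 i
      simp only [hpiRdef]
      positivity
    have hpile : ∀ i, piR i ≤ 1 := by
      intro i
      rcases (hlam0 i).eq_or_lt with h | h
      · simp [hpiRdef, ← h]
      · have hs : Real.sqrt (lam i) ≠ 0 := by positivity
        have h1 := Real.mul_self_sqrt (hlam0 i)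
        have : piR i = 1 := by
          simp only [hpiRdef]
          field_simp <;> nlinarith [h1]
        simp [this]
    have hWWH : (E * D' * Eᴴ * M) * (E * D' * Eᴴ * M)ᴴ
        = E * Matrix.diagonal (fun i => (piR i : ℂ)) * Eᴴ := by
      rw [hWH]
      have e1 : (E * D' * Eᴴ * M) * (Mᴴ * (E * D' * Eᴴ))
          = (E * D' * Eᴴ) * ((M * Mᴴ) * (E * D' * Eᴴ)) := by
        simp only [Matrix.mul_assoc]
      rw [e1]
      conv_lhs => rw [hspec]
      rw [sandwich _ _ _ hE1, sandwich _ _ _ hE1, Matrix.diagonal_mul_diagonal,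
        Matrix.diagonal_mul_diagonal]
      congr 1
      · congr 1
        funext i
        simp only [hpiRdef]
        push_cast
        ring
    have hsum : ∀ x : m → ℂ, ∑ i, Complex.normSq (((E * D' * Eᴴ * M)ᴴ *ᵥ x) i)
        ≤ ∑ i, Complex.normSq (x i) := by
      intro x
      have h := dot_self_mulVec ((E * D' * Eᴴ * M)ᴴ) x
      rw [Matrix.conjTranspose_conjTranspose, hWWH] at h
      have hsplit : star x ⬝ᵥ ((E * Matrix.diagonal (fun i => (piR i : ℂ)) * Eᴴ) *ᵥ x)
          = star (Eᴴ *ᵥ x) ⬝ᵥ (Matrix.diagonal (fun i => (piR i : ℂ)) *ᵥ (Eᴴ *ᵥ x)) := by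
        rw [← Matrix.mulVec_mulVec, ← Matrix.mulVec_mulVec, dotProduct_mulVec,
          Matrix.star_mulVec, Matrix.conjTranspose_conjTranspose]
      rw [hsplit, dot_diag, dot_self_eq] at h
      have hco : ∑ i, ((piR i : ℂ)) * (Complex.normSq ((Eᴴ *ᵥ x) i) : ℂ)
          = ((∑ i, piR i * Complex.normSq ((Eᴴ *ᵥ x) i) : ℝ) : ℂ) := by
        push_cast
        rfl
      rw [hco] at h
      have hre := Complex.ofReal_inj.mp h
      rw [hre]
      have hle : ∑ i, piR i * Complex.normSq ((Eᴴ *ᵥ x) i)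
          ≤ ∑ i, Complex.normSq ((Eᴴ *ᵥ x) i) :=
        Finset.sum_le_sum fun i _ =>
          mul_le_of_le_one_left (Complex.normSq_nonneg _) (hpile i)
      have heq : ∑ i, Complex.normSq ((Eᴴ *ᵥ x) i) = ∑ i, Complex.normSq (x i) :=
        sum_normSq_mulVec Eᴴ (by rw [Matrix.conjTranspose_conjTranspose, hE2]) x
      rw [heq] at hle
      exact hle
    have hcontrH : ∀ x : m → ℂ, en ((E * D' * Eᴴ * M)ᴴ *ᵥ x) ≤ en x := fun x =>
      Real.sqrt_le_sqrt (hsum x)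
    intro u
    set z := (E * D' * Eᴴ * M) *ᵥ u with hz
    have key : star ((E * D' * Eᴴ * M)ᴴ *ᵥ z) ⬝ᵥ u = star z ⬝ᵥ z :=
      calc star ((E * D' * Eᴴ * M)ᴴ *ᵥ z) ⬝ᵥ u
          = (star z ᵥ* (E * D' * Eᴴ * M)) ⬝ᵥ u := by
            rw [Matrix.star_mulVec, Matrix.conjTranspose_conjTranspose]
        _ = star z ⬝ᵥ ((E * D' * Eᴴ * M) *ᵥ u) := (dotProduct_mulVec _ _ _).symm
        _ = star z ⬝ᵥ z := by rw [← hz]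
    have h2 : en z ^ 2 ≤ en z * en u := by
      have e1 : en z ^ 2 = (star z ⬝ᵥ z).re := by
        rw [← en_sq', ← Complex.ofReal_pow]
        exact (Complex.ofReal_re _).symm
      rw [e1, ← key]
      calc (star ((E * D' * Eᴴ * M)ᴴ *ᵥ z) ⬝ᵥ u).re
          ≤ ‖star ((E * D' * Eᴴ * M)ᴴ *ᵥ z) ⬝ᵥ u‖ := Complex.re_le_norm _
        _ ≤ en ((E * D' * Eᴴ * M)ᴴ *ᵥ z) * en u := cs_dot _ _
        _ ≤ en z * en u := mul_le_mul_of_nonneg_right (hcontrH z) (en_nonneg u)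
    rcases (en_nonneg z).eq_or_lt with h0 | h0
    · rw [← h0]; exact en_nonneg u
    · have h3 : en z * en z ≤ en z * en u := by rwa [← pow_two]
      exact le_of_mul_le_mul_left h3 h0
  · rw [hWH, ← Matrix.mul_assoc]
    conv_lhs => rw [hspec]
    rw [sandwich _ _ _ hE1, Matrix.diagonal_mul_diagonal]
    have hfun : (fun i => (lam i : ℂ) * ((Real.sqrt (lam i))⁻¹ : ℂ)) =
        ((↑) ∘ Real.sqrt ∘ lam : m → ℂ) := by
      funext i
      rw [← Complex.ofReal_inv, ← Complex.ofReal_mul]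
      rcases (hlam0 i).eq_or_lt with h | h
      · simp [← h]
      · have hs : Real.sqrt (lam i) ≠ 0 := by positivity
        field_simp
        exact congrArg _ (Real.div_sqrt)
    rw [hfun]
    rfl

lemma en_star {ι : Type*} [Fintype ι] (w : ι → ℂ) : en (star w) = en w := by
  unfold en
  congr 1
  exact Finset.sum_congr rfl fun i _ => by simp

lemma trace_vecMulVec_mul {m n : Type*} [Fintype m] [Fintype n]
    (v : m → ℂ) (w : n → ℂ) (W : Matrix m n ℂ) :
    (vecMulVec v w * Wᴴ).trace = star (W *ᵥ star w) ⬝ᵥ v := by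
  have lhs : (vecMulVec v w * Wᴴ).trace
      = ∑ r, ∑ g, v r * w g * (starRingEnd ℂ) (W r g) := by
    simp only [Matrix.trace, Matrix.diag_apply, Matrix.mul_apply, Matrix.vecMulVec_apply,
      Matrix.conjTranspose_apply, Complex.star_def]
  have rhs : star (W *ᵥ star w) ⬝ᵥ v
      = ∑ r, ∑ g, (starRingEnd ℂ) (W r g) * w g * v r := by
    simp only [dotProduct, Matrix.mulVec, Pi.star_apply, Complex.star_def,
      map_sum, _root_.map_mul, Complex.conj_conj, Finset.sum_mul]
  rw [lhs, rhs]
  exact Finset.sum_congr rfl fun r _ => Finset.sum_congr rfl fun g _ => by ring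

lemma traceNorm_decomp_le {m n : Type*} [Fintype m] [Fintype n] [DecidableEq m]
    {K : ℕ} (α : Fin K → ℂ) (v : Fin K → m → ℂ) (w : Fin K → n → ℂ)
    (hv : ∀ k, en (v k) ≤ 1) (hw : ∀ k, en (w k) ≤ 1) :
    traceNorm (∑ k, α k • vecMulVec (v k) (w k)) ≤ ∑ k, ‖α k‖ := by
  obtain ⟨W, hWc, hMW⟩ := polar_exists (∑ k, α k • vecMulVec (v k) (w k))
  have h0 : traceNorm (∑ k, α k • vecMulVec (v k) (w k))
      = ((∑ k, α k • vecMulVec (v k) (w k)) * Wᴴ).trace.re := by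
    unfold traceNorm
    rw [← hMW]
  rw [h0, Matrix.sum_mul]
  simp only [Matrix.smul_mul, Matrix.trace_sum, Matrix.trace_smul]
  have hterm : ∀ k, ‖α k • (vecMulVec (v k) (w k) * Wᴴ).trace‖
      ≤ ‖α k‖ := by
    intro k
    rw [smul_eq_mul, norm_mul]
    have hc : ‖(vecMulVec (v k) (w k) * Wᴴ).trace‖ ≤ 1 := by
      rw [trace_vecMulVec_mul]
      calc ‖star (W *ᵥ star (w k)) ⬝ᵥ v k‖
          ≤ en (W *ᵥ star (w k)) * en (v k) := cs_dot _ _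
        _ ≤ en (w k) * 1 := by
            have h1 : en (W *ᵥ star (w k)) ≤ en (w k) := by
              calc en (W *ᵥ star (w k)) ≤ en (star (w k)) := hWc _
                _ = en (w k) := en_star _
            exact mul_le_mul h1 (hv k) (en_nonneg _) (en_nonneg _)
        _ ≤ 1 := by rw [mul_one]; exact hw k
    calc ‖α k‖ * ‖(vecMulVec (v k) (w k) * Wᴴ).trace‖
        ≤ ‖α k‖ * 1 :=
          mul_le_mul_of_nonneg_left hc (norm_nonneg _)
      _ = ‖α k‖ := mul_one _
  calc (∑ k, α k • (vecMulVec (v k) (w k) * Wᴴ).trace).re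
      ≤ ‖∑ k, α k • (vecMulVec (v k) (w k) * Wᴴ).trace‖ := Complex.re_le_norm _
    _ ≤ ∑ k, ‖α k • (vecMulVec (v k) (w k) * Wᴴ).trace‖ :=
        norm_sum_le _ _
    _ ≤ ∑ k, ‖α k‖ := Finset.sum_le_sum fun k _ => hterm k

lemma gqo_entry {ι : Type*} [Fintype ι] [DecidableEq ι] {dE : ℕ} (e : Fin dE → ℂ)
    (U V : Matrix (ι × Fin dE) (ι × Fin dE) ℂ) (a a' b b' : ι) :
    ptraceE (U * ((Matrix.single a' b' 1) ⊗ₖ Matrix.vecMulVec e (star e)) * Vᴴ) a b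
      = ∑ k, (∑ s, U (a, k) (a', s) * e s) * (starRingEnd ℂ) (∑ t, V (b, k) (b', t) * e t) := by
  simp only [ptraceE, Matrix.of_apply, Matrix.mul_apply, Matrix.kroneckerMap_apply,
    Matrix.vecMulVec_apply, Matrix.conjTranspose_apply, Matrix.single,
    Matrix.of_apply, Pi.star_apply, Complex.star_def]
  simp only [Fintype.sum_prod_type]
  refine Finset.sum_congr rfl fun k _ => ?_
  simp only [ite_mul, mul_ite, one_mul, mul_one, zero_mul, mul_zero, ite_and,
    Finset.sum_ite_irrel, Finset.sum_const_zero,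
    Finset.sum_ite_eq, Finset.mem_univ, if_true, map_sum, _root_.map_mul,
    Finset.sum_mul, Finset.mul_sum]
  exact Finset.sum_congr rfl fun t _ => Finset.sum_congr rfl fun s _ => by ring

lemma cs_entry {κ : Type*} [Fintype κ] (x y : κ → ℂ) :
    Complex.normSq (∑ k, x k * (starRingEnd ℂ) (y k))
      ≤ (∑ k, Complex.normSq (x k)) * (∑ k, Complex.normSq (y k)) := by
  have h1 : ∑ k, x k * (starRingEnd ℂ) (y k) = star y ⬝ᵥ x := by
    simp only [dotProduct, Pi.star_apply, Complex.star_def]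
    exact Finset.sum_congr rfl fun k _ => by ring
  rw [h1, ← Complex.sq_norm]
  have h2 := cs_dot y x
  calc ‖star y ⬝ᵥ x‖ ^ 2 ≤ (en y * en x) ^ 2 := by
        have := norm_nonneg (star y ⬝ᵥ x)
        nlinarith [mul_nonneg (en_nonneg y) (en_nonneg x)]
    _ = (∑ k, Complex.normSq (x k)) * (∑ k, Complex.normSq (y k)) := by
        rw [mul_pow, en_sq, en_sq]; ring

lemma sum_one_of_unit {ι : Type*} [Fintype ι] [DecidableEq ι] {dE : ℕ} {e : Fin dE → ℂ}
    (he : star e ⬝ᵥ e = 1) {U : Matrix (ι × Fin dE) (ι × Fin dE) ℂ}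
    (hU : U ∈ Matrix.unitaryGroup (ι × Fin dE) ℂ) (a' : ι) :
    ∑ p : ι × Fin dE, Complex.normSq (∑ s, U p (a', s) * e s) = 1 := by
  have hU' : Uᴴ * U = 1 := by
    simpa [Matrix.star_eq_conjTranspose] using Matrix.mem_unitaryGroup_iff'.mp hU
  set w : ι × Fin dE → ℂ := fun x => if x.1 = a' then e x.2 else 0 with hwdef
  have hw : ∀ p : ι × Fin dE, (∑ s, U p (a', s) * e s) = (U *ᵥ w) p := by
    intro p
    simp only [hwdef, Matrix.mulVec, dotProduct, Fintype.sum_prod_type, mul_ite,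
      mul_zero, Finset.sum_ite_irrel, Finset.sum_const_zero, Finset.sum_ite_eq',
      Finset.mem_univ, if_true]
  have he' : ∑ s, Complex.normSq (e s) = 1 := by
    have := dot_self_eq e
    rw [he] at this
    exact_mod_cast Complex.ofReal_inj.mp (by exact_mod_cast this.symm)
  calc ∑ p : ι × Fin dE, Complex.normSq (∑ s, U p (a', s) * e s)
      = ∑ p, Complex.normSq ((U *ᵥ w) p) :=
        Finset.sum_congr rfl fun p _ => by rw [hw]
    _ = ∑ x, Complex.normSq (w x) := sum_normSq_mulVec U hU' w
    _ = 1 := by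
        simp only [hwdef, Fintype.sum_prod_type, apply_ite Complex.normSq,
          Complex.normSq_zero, Finset.sum_ite_irrel, Finset.sum_const_zero,
          Finset.sum_ite_eq', Finset.mem_univ, if_true]
        exact he'

lemma gqo_frobenius {ι : Type*} [Fintype ι] [DecidableEq ι]
    {Φ : Matrix ι ι ℂ → Matrix ι ι ℂ} (hΦ : IsGQO Φ) :
    ∑ r : (ι × ι) × (ι × ι),
      Complex.normSq (Φ (Matrix.single r.1.2 r.2.2 1) r.1.1 r.2.1)
      ≤ (Fintype.card ι : ℝ) ^ 2 := by
  obtain ⟨dE, e, U, Vm, he, hU, hVm, heq⟩ := hΦ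
  have hcolsum : ∀ (A : Matrix (ι × Fin dE) (ι × Fin dE) ℂ),
      A ∈ Matrix.unitaryGroup (ι × Fin dE) ℂ →
      ∑ ra : ι × ι, ∑ k : Fin dE, Complex.normSq (∑ s, A (ra.1, k) (ra.2, s) * e s)
        = (Fintype.card ι : ℝ) := by
    intro A hA
    calc ∑ ra : ι × ι, ∑ k : Fin dE, Complex.normSq (∑ s, A (ra.1, k) (ra.2, s) * e s)
        = ∑ a : ι, ∑ a' : ι, ∑ k : Fin dE, Complex.normSq (∑ s, A (a, k) (a', s) * e s) := by
          rw [Fintype.sum_prod_type]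
      _ = ∑ a' : ι, ∑ a : ι, ∑ k : Fin dE, Complex.normSq (∑ s, A (a, k) (a', s) * e s) :=
          Finset.sum_comm
      _ = ∑ a' : ι, ∑ p : ι × Fin dE, Complex.normSq (∑ s, A p (a', s) * e s) := by
          refine Finset.sum_congr rfl fun a' _ => ?_
          rw [Fintype.sum_prod_type]
      _ = ∑ _a' : ι, (1 : ℝ) :=
          Finset.sum_congr rfl fun a' _ => sum_one_of_unit he hA a'
      _ = (Fintype.card ι : ℝ) := by simp
  calc ∑ r : (ι × ι) × (ι × ι),
        Complex.normSq (Φ (Matrix.single r.1.2 r.2.2 1) r.1.1 r.2.1)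
      = ∑ ra : ι × ι, ∑ rb : ι × ι,
          Complex.normSq (Φ (Matrix.single ra.2 rb.2 1) ra.1 rb.1) := by
        rw [Fintype.sum_prod_type]
    _ ≤ ∑ ra : ι × ι, ∑ rb : ι × ι,
          (∑ k, Complex.normSq (∑ s, U (ra.1, k) (ra.2, s) * e s)) *
          (∑ k, Complex.normSq (∑ t, Vm (rb.1, k) (rb.2, t) * e t)) := by
        refine Finset.sum_le_sum fun ra _ => Finset.sum_le_sum fun rb _ => ?_
        rw [heq, gqo_entry]
        exact cs_entry _ _
    _ = (∑ ra : ι × ι, ∑ k, Complex.normSq (∑ s, U (ra.1, k) (ra.2, s) * e s)) *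
        (∑ rb : ι × ι, ∑ k, Complex.normSq (∑ t, Vm (rb.1, k) (rb.2, t) * e t)) := by
        rw [Finset.sum_mul_sum]
    _ = (Fintype.card ι : ℝ) * (Fintype.card ι : ℝ) := by
        rw [hcolsum U hU, hcolsum Vm hVm]
    _ = (Fintype.card ι : ℝ) ^ 2 := (sq _).symm

lemma tensorMap_std {ι : Type*} [Fintype ι] [DecidableEq ι] {L : ℕ}
    (Φ : Fin L → (Matrix ι ι ℂ → Matrix ι ι ℂ)) (x y a b : Fin L → ι) :
    tensorMap Φ (Matrix.single x y 1) a b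
      = ∏ m, Φ m (Matrix.single (x m) (y m) 1) (a m) (b m) := by
  simp only [tensorMap, Matrix.of_apply, Matrix.single, ite_and, ite_mul, one_mul,
    zero_mul, Finset.sum_ite_irrel, Finset.sum_const_zero, Finset.sum_ite_eq,
    Finset.mem_univ, if_true]

lemma prod_split {L : ℕ} (l : Fin L) (G : Fin L → ℂ) :
    ∏ m, G m = G l * ∏ m : {m : Fin L // m ≠ l}, G m.1 := by
  rw [← Finset.mul_prod_erase Finset.univ G (Finset.mem_univ l)]
  congr 1
  exact Finset.prod_subtype (Finset.univ.erase l)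
    (fun x => by simp [Finset.mem_erase]) G

lemma card_ne {L : ℕ} (l : Fin L) : Fintype.card {m : Fin L // m ≠ l} = L - 1 := by
  have : Fintype.card {m : Fin L // ¬ m = l} = L - 1 := by
    rw [Fintype.card_subtype_compl, Fintype.card_subtype_eq, Fintype.card_fin]
  exact this

theorem stmt1 (d L : ℕ) (hd : 0 < d) (hL : 0 < L)
    (V : Matrix (Fin L → Fin d) (Fin L → Fin d) ℂ) (hV : V.IsHermitian)
    (K : ℕ) (α : Fin K → ℂ)
    (Φ : Fin L → Fin K → (Matrix (Fin d) (Fin d) ℂ → Matrix (Fin d) (Fin d) ℂ))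
    (hΦ : ∀ l k, IsGQO (Φ l k))
    (hdec : ∀ ρ, (-Complex.I) • (V * ρ - ρ * V) = ∑ k, α k • tensorMap (fun l => Φ l k) ρ) :
    ∀ l : Fin L,
      traceNorm (realign (choiOp (fun ρ => (-Complex.I) • (V * ρ - ρ * V))) l)
        ≤ ∑ k, ‖α k‖ := by
  intro l
  set F : Fin L → Fin K → (((Fin d × Fin d) × (Fin d × Fin d)) → ℂ) :=
    fun m k r => (d : ℂ)⁻¹ * Φ m k (Matrix.single r.1.2 r.2.2 1) r.1.1 r.2.1
    with hFdef
  set Wf : Fin K → ({m : Fin L // m ≠ l} → (Fin d × Fin d) × (Fin d × Fin d)) → ℂ :=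
    fun k g => ∏ m : {m : Fin L // m ≠ l}, F m.1 k (g m) with hWfdef
  have hdC : (d : ℂ) ≠ 0 := Nat.cast_ne_zero.mpr hd.ne'
  have hconst : (((d : ℂ)) ^ L)⁻¹
      = (d : ℂ)⁻¹ * ∏ _m : {m : Fin L // m ≠ l}, (d : ℂ)⁻¹ := by
    rw [Finset.prod_const, Finset.card_univ, card_ne l]
    rw [← pow_succ' ((d : ℂ)⁻¹) (L - 1), Nat.sub_add_cancel hL, inv_pow]
  -- decomposition of the realigned Choi matrix
  have hkey : realign (choiOp (fun ρ => (-Complex.I) • (V * ρ - ρ * V))) l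
      = ∑ k, α k • vecMulVec (F l k) (Wf k) := by
    ext r g
    simp only [realign, choiOp, Matrix.of_apply]
    rw [hdec]
    simp only [Matrix.sum_apply, Matrix.smul_apply, smul_eq_mul, Finset.mul_sum,
      Matrix.vecMulVec_apply]
    refine Finset.sum_congr rfl fun k _ => ?_
    rw [tensorMap_std]
    set G : Fin L → ℂ := fun m =>
      Φ m k (Matrix.single
          ((if h : m = l then r.1 else (g ⟨m, h⟩).1).2)
          ((if h : m = l then r.2 else (g ⟨m, h⟩).2).2) 1)
        ((if h : m = l then r.1 else (g ⟨m, h⟩).1).1)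
        ((if h : m = l then r.2 else (g ⟨m, h⟩).2).1) with hGdef
    have hGl : G l = Φ l k (Matrix.single r.1.2 r.2.2 1) r.1.1 r.2.1 := by
      simp [hGdef]
    have hGm : ∀ m : {m : Fin L // m ≠ l},
        G m.1 = Φ m.1 k (Matrix.single ((g m).1.2) ((g m).2.2) 1)
          ((g m).1.1) ((g m).2.1) := by
      rintro ⟨m, hm⟩
      simp [hGdef, dif_neg hm]
    rw [prod_split l G, hGl, Fintype.card_fin, hconst, hFdef, hWfdef]
    simp only [hWfdef, hFdef]
    rw [Finset.prod_mul_distrib]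
    have hprod : ∏ m : {m : Fin L // m ≠ l}, G m.1
        = ∏ m : {m : Fin L // m ≠ l},
            Φ m.1 k (Matrix.single ((g m).1.2) ((g m).2.2) 1)
              ((g m).1.1) ((g m).2.1) :=
      Finset.prod_congr rfl fun m _ => hGm m
    rw [hprod]
    ring
  rw [hkey]
  -- norms
  have hvF : ∀ (m : Fin L) (k : Fin K),
      ∑ r : (Fin d × Fin d) × (Fin d × Fin d), Complex.normSq (F m k r) ≤ 1 := by
    intro m k
    have hS := gqo_frobenius (hΦ m k)
    rw [Fintype.card_fin] at hS
    have hd2 : Complex.normSq ((d : ℂ)⁻¹) = ((d : ℝ) ^ 2)⁻¹ := by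
      rw [Complex.normSq_inv, Complex.normSq_natCast, ← sq]
    have hdpos : (0 : ℝ) < (d : ℝ) ^ 2 := by positivity
    calc ∑ r : (Fin d × Fin d) × (Fin d × Fin d), Complex.normSq (F m k r)
        = ((d : ℝ) ^ 2)⁻¹ * ∑ r : (Fin d × Fin d) × (Fin d × Fin d),
            Complex.normSq (Φ m k (Matrix.single r.1.2 r.2.2 1) r.1.1 r.2.1) := by
          rw [Finset.mul_sum]
          refine Finset.sum_congr rfl fun rr _ => ?_
          rw [hFdef]
          simp only []
          rw [_root_.map_mul Complex.normSq, hd2]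
      _ ≤ ((d : ℝ) ^ 2)⁻¹ * (d : ℝ) ^ 2 := by
          exact mul_le_mul_of_nonneg_left hS (by positivity)
      _ = 1 := inv_mul_cancel₀ hdpos.ne'
  have hv : ∀ k, en (F l k) ≤ 1 := fun k => Real.sqrt_le_one.mpr (hvF l k)
  have hw : ∀ k, en (Wf k) ≤ 1 := by
    intro k
    refine Real.sqrt_le_one.mpr ?_
    have hswap := Finset.prod_univ_sum
      (fun _ : {m : Fin L // m ≠ l} => (Finset.univ : Finset ((Fin d × Fin d) × (Fin d × Fin d))))
      (fun m r => Complex.normSq (F m.1 k r))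
    rw [Fintype.piFinset_univ] at hswap
    calc ∑ g, Complex.normSq (Wf k g)
        = ∑ g : {m : Fin L // m ≠ l} → (Fin d × Fin d) × (Fin d × Fin d),
            ∏ m : {m : Fin L // m ≠ l}, Complex.normSq (F m.1 k (g m)) := by
          refine Finset.sum_congr rfl fun g _ => ?_
          rw [hWfdef]
          exact map_prod Complex.normSq _ _
      _ = ∏ m : {m : Fin L // m ≠ l},
            ∑ r : (Fin d × Fin d) × (Fin d × Fin d), Complex.normSq (F m.1 k r) :=
          hswap.symm
      _ ≤ 1 := Finset.prod_le_one
          (fun m _ => Finset.sum_nonneg fun r _ => Complex.normSq_nonneg _)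
          (fun m _ => hvF m.1 k)
  exact traceNorm_decomp_le α (F l) Wf hv hw
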